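/- Double robustness of the A-IPTW score: if either Q̃ = Q (the true conditional outcome) or g̃ = g (the true propensity score), then E[(T/g̃(Z))(Y − Q̃(1,Z)) − ((1−T)/(1−g̃(Z)))(Y − Q̃(0,Z)) + Q̃(1,Z) − Q̃(0,Z)] = E[Q(1,Z) − Q(0,Z)], provided ε ≤ g̃(Z) ≤ 1−ε almost surely. -/

import Mathlib

open MeasureTheory ProbabilityTheory

/-- integrable times a.e.-bounded (bounded factor on the right) is integrable. -/
lemma my_mul_bdd {Ω : Type*} {m0 : MeasurableSpace Ω} {μ : Measure Ω}
    {q r : Ω → ℝ} {C : ℝ} (hq : Integrable q μ) (hr : AEStronglyMeasurable r μ)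
    (hbd : ∀ᵐ ω ∂μ, ‖r ω‖ ≤ C) : Integrable (fun ω => q ω * r ω) μ :=
  (hq.bdd_mul hr hbd).congr (Filter.Eventually.of_forall fun ω => mul_comm _ _)

/-- pull-out property at the level of integrals. -/
lemma my_pull {Ω : Type*} {m0 : MeasurableSpace Ω} {μ : Measure Ω} [IsProbabilityMeasure μ]
    {m : MeasurableSpace Ω} (hm : m ≤ m0)
    {φ f r : Ω → ℝ} (hφ : StronglyMeasurable[m] φ) {C : ℝ}
    (hbd : ∀ᵐ ω ∂μ, ‖φ ω‖ ≤ C) (hf : Integrable f μ)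
    (hid : μ[f|m] =ᵐ[μ] r) :
    ∫ ω, φ ω * f ω ∂μ = ∫ ω, φ ω * r ω ∂μ := by
  have hint : Integrable (φ * f) μ :=
    hf.bdd_mul ((hφ.mono hm).aestronglyMeasurable) hbd
  calc ∫ ω, φ ω * f ω ∂μ = ∫ ω, (μ[φ * f|m]) ω ∂μ := (integral_condExp hm (f := φ * f)).symm
    _ = ∫ ω, φ ω * r ω ∂μ := by
        refine integral_congr_ae ?_
        filter_upwards [condExp_mul_of_stronglyMeasurable_left hφ hint hf, hid] with ω h1 h2
        simp only [Pi.mul_apply] at h1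
        rw [h1, h2]

/-- Double robustness of the A-IPTW score: if either the candidate outcome model
`Q̃` equals the true `Q` or the candidate propensity `g̃` equals the true `g`, then the expected
(un-centered) A-IPTW score equals the ATE `E[Q(1,Z) - Q(0,Z)]`, provided `ε ≤ g̃(Z) ≤ 1-ε` a.s. -/
theorem stmt3
    {Ω : Type*} [MeasurableSpace Ω]
    (μ : Measure Ω) [IsProbabilityMeasure μ]
    (Y T Z : Ω → ℝ)
    (hY : Measurable Y) (hT : Measurable T) (hZ : Measurable Z)
    (hTbin : ∀ ω, T ω = 0 ∨ T ω = 1)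
    (ε : ℝ) (hε : 0 < ε)
    -- true propensity score, bounded away from 0 and 1
    (g : ℝ → ℝ) (hg : Measurable g)
    (hgdef : (fun ω => g (Z ω)) =ᵐ[μ] μ[T | MeasurableSpace.comap Z inferInstance])
    (hpos : ∀ᵐ ω ∂μ, ε ≤ g (Z ω) ∧ g (Z ω) ≤ 1 - ε)
    -- true conditional expected outcomes: E[Y 1{T=t} | Z] = Q t (Z) ⬝ P(T=t | Z)
    (Q : ℝ → ℝ → ℝ) (hQmeas : ∀ t, Measurable (Q t))
    (hQ1 : μ[fun ω => (if T ω = 1 then (1:ℝ) else 0) * Y ω |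
        MeasurableSpace.comap Z inferInstance] =ᵐ[μ] fun ω => Q 1 (Z ω) * g (Z ω))
    (hQ0 : μ[fun ω => (if T ω = 0 then (1:ℝ) else 0) * Y ω |
        MeasurableSpace.comap Z inferInstance] =ᵐ[μ] fun ω => Q 0 (Z ω) * (1 - g (Z ω)))
    -- candidate (possibly misspecified) nuisance functions
    (Q' : ℝ → ℝ → ℝ) (hQ'meas : ∀ t, Measurable (Q' t))
    (g' : ℝ → ℝ) (hg' : Measurable g')
    (hpos' : ∀ᵐ ω ∂μ, ε ≤ g' (Z ω) ∧ g' (Z ω) ≤ 1 - ε)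
    -- square integrability
    (hY2 : MemLp Y 2 μ)
    (hQ2 : ∀ t, t = 0 ∨ t = 1 → MemLp (fun ω => Q t (Z ω)) 2 μ)
    (hQ'2 : ∀ t, t = 0 ∨ t = 1 → MemLp (fun ω => Q' t (Z ω)) 2 μ)
    -- double robustness hypothesis: one of the nuisances is correctly specified
    (hdr : (∀ t z, Q' t z = Q t z) ∨ (∀ z, g' z = g z)) :
    ∫ ω, (T ω / g' (Z ω) * (Y ω - Q' 1 (Z ω))
        - (1 - T ω) / (1 - g' (Z ω)) * (Y ω - Q' 0 (Z ω))
        + (Q' 1 (Z ω) - Q' 0 (Z ω))) ∂μ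
      = ∫ ω, (Q 1 (Z ω) - Q 0 (Z ω)) ∂μ := by
  have hm : MeasurableSpace.comap Z inferInstance ≤ _ := hZ.comap_le
  set m := MeasurableSpace.comap Z inferInstance with hmdef
  -- basic integrability
  have hYint : Integrable Y μ := hY2.integrable one_le_two
  have hQ1int : Integrable (fun ω => Q 1 (Z ω)) μ := (hQ2 1 (Or.inr rfl)).integrable one_le_two
  have hQ0int : Integrable (fun ω => Q 0 (Z ω)) μ := (hQ2 0 (Or.inl rfl)).integrable one_le_two
  have hQ'1int : Integrable (fun ω => Q' 1 (Z ω)) μ := (hQ'2 1 (Or.inr rfl)).integrable one_le_two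
  have hQ'0int : Integrable (fun ω => Q' 0 (Z ω)) μ := (hQ'2 0 (Or.inl rfl)).integrable one_le_two
  have hTbd : ∀ ω, ‖T ω‖ ≤ 1 := by
    intro ω; rcases hTbin ω with h | h <;> simp [h]
  have h1Tbd : ∀ ω, ‖1 - T ω‖ ≤ 1 := by
    intro ω; rcases hTbin ω with h | h <;> simp [h]
  have hTint : Integrable T μ := by
    have := (integrable_const (μ := μ) (1:ℝ)).bdd_mul hT.aestronglyMeasurable (Filter.Eventually.of_forall hTbd)
    simpa using this
  have h1Tint : Integrable (fun ω => 1 - T ω) μ := (integrable_const 1).sub hTint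
  have hTY : Integrable (fun ω => T ω * Y ω) μ :=
    hYint.bdd_mul hT.aestronglyMeasurable (Filter.Eventually.of_forall hTbd)
  have h1TY : Integrable (fun ω => (1 - T ω) * Y ω) μ :=
    hYint.bdd_mul ((measurable_const.sub hT).aestronglyMeasurable) (Filter.Eventually.of_forall h1Tbd)
  have iQ1T : Integrable (fun ω => Q' 1 (Z ω) * T ω) μ :=
    my_mul_bdd hQ'1int hT.aestronglyMeasurable (Filter.Eventually.of_forall hTbd)
  have iQ0T : Integrable (fun ω => Q' 0 (Z ω) * (1 - T ω)) μ :=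
    my_mul_bdd hQ'0int ((measurable_const.sub hT).aestronglyMeasurable)
      (Filter.Eventually.of_forall h1Tbd)
  -- a.e. bounds
  have hb1 : ∀ᵐ ω ∂μ, ‖(g' (Z ω))⁻¹‖ ≤ ε⁻¹ := by
    filter_upwards [hpos'] with ω h
    have h0 : 0 < g' (Z ω) := lt_of_lt_of_le hε h.1
    rw [Real.norm_eq_abs, abs_of_pos (inv_pos.2 h0)]
    exact inv_anti₀ hε h.1
  have hb2 : ∀ᵐ ω ∂μ, ‖(1 - g' (Z ω))⁻¹‖ ≤ ε⁻¹ := by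
    filter_upwards [hpos'] with ω h
    have hle : ε ≤ 1 - g' (Z ω) := by linarith [h.2]
    have h0 : 0 < 1 - g' (Z ω) := lt_of_lt_of_le hε hle
    rw [Real.norm_eq_abs, abs_of_pos (inv_pos.2 h0)]
    exact inv_anti₀ hε hle
  have hgbd : ∀ᵐ ω ∂μ, ‖g (Z ω)‖ ≤ 1 := by
    filter_upwards [hpos] with ω h
    rw [Real.norm_eq_abs, abs_le]
    constructor <;> [linarith [h.1]; linarith [h.2]]
  have h1gbd : ∀ᵐ ω ∂μ, ‖1 - g (Z ω)‖ ≤ 1 := by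
    filter_upwards [hpos] with ω h
    rw [Real.norm_eq_abs, abs_le]
    constructor <;> [linarith [h.2]; linarith [h.1]]
  -- strong measurability w.r.t. m
  have smφa : StronglyMeasurable[m] (fun ω => (g' (Z ω))⁻¹) :=
    (Measurable.comp hg'.inv (comap_measurable Z)).stronglyMeasurable
  have smφc : StronglyMeasurable[m] (fun ω => (1 - g' (Z ω))⁻¹) :=
    (Measurable.comp (measurable_const.sub hg').inv
      (comap_measurable Z)).stronglyMeasurable
  have smQ'1 : StronglyMeasurable[m] (fun ω => Q' 1 (Z ω)) :=
    (Measurable.comp (hQ'meas 1) (comap_measurable Z)).stronglyMeasurable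
  have smQ'0 : StronglyMeasurable[m] (fun ω => Q' 0 (Z ω)) :=
    (Measurable.comp (hQ'meas 0) (comap_measurable Z)).stronglyMeasurable
  have aesφa :=
    ((hg'.comp hZ).inv).aestronglyMeasurable (μ := μ)
  have aesφc :=
    (((measurable_const (a := (1:ℝ))).sub (hg'.comp hZ)).inv).aestronglyMeasurable (μ := μ)
  -- conditional expectation facts
  have hcT : μ[T|m] =ᵐ[μ] fun ω => g (Z ω) := hgdef.symm
  have hc1T : μ[fun ω => 1 - T ω|m] =ᵐ[μ] fun ω => 1 - g (Z ω) := by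
    have h : μ[(fun _ => (1:ℝ)) - T|m] =ᵐ[μ] μ[fun _ => (1:ℝ)|m] - μ[T|m] :=
      condExp_sub (integrable_const 1) hTint m
    have hconst : μ[(fun _ : Ω => (1:ℝ))|m] = fun _ => (1:ℝ) := condExp_const hm 1
    rw [hconst] at h
    filter_upwards [h, hcT] with ω h1 h2
    calc (μ[fun ω => 1 - T ω|m]) ω = ((fun _ : Ω => (1:ℝ)) - μ[T|m]) ω := h1
      _ = 1 - g (Z ω) := by simp [h2]
  have hTYeq : (fun ω => T ω * Y ω) = fun ω => (if T ω = 1 then (1:ℝ) else 0) * Y ω := by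
    funext ω; rcases hTbin ω with h | h <;> simp [h]
  have hcTY : μ[fun ω => T ω * Y ω|m] =ᵐ[μ] fun ω => Q 1 (Z ω) * g (Z ω) := by
    rw [hTYeq]; exact hQ1
  have h1TYeq : (fun ω => (1 - T ω) * Y ω) = fun ω => (if T ω = 0 then (1:ℝ) else 0) * Y ω := by
    funext ω; rcases hTbin ω with h | h <;> simp [h]
  have hc1TY : μ[fun ω => (1 - T ω) * Y ω|m] =ᵐ[μ] fun ω => Q 0 (Z ω) * (1 - g (Z ω)) := by
    rw [h1TYeq]; exact hQ0
  have hcQ1T : μ[fun ω => Q' 1 (Z ω) * T ω|m] =ᵐ[μ] fun ω => Q' 1 (Z ω) * g (Z ω) := by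
    have h := condExp_mul_of_stronglyMeasurable_left smQ'1 iQ1T hTint
    filter_upwards [h, hcT] with ω h1 h2
    calc (μ[fun ω => Q' 1 (Z ω) * T ω|m]) ω
        = ((fun ω => Q' 1 (Z ω)) * μ[T|m]) ω := h1
      _ = Q' 1 (Z ω) * g (Z ω) := by simp [h2]
  have hcQ0T : μ[fun ω => Q' 0 (Z ω) * (1 - T ω)|m] =ᵐ[μ]
      fun ω => Q' 0 (Z ω) * (1 - g (Z ω)) := by
    have h := condExp_mul_of_stronglyMeasurable_left smQ'0 iQ0T h1Tint
    filter_upwards [h, hc1T] with ω h1 h2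
    calc (μ[fun ω => Q' 0 (Z ω) * (1 - T ω)|m]) ω
        = ((fun ω => Q' 0 (Z ω)) * μ[fun ω => 1 - T ω|m]) ω := h1
      _ = Q' 0 (Z ω) * (1 - g (Z ω)) := by simp [h2]
  -- integral identities from the pull-out property
  have e1 : ∫ ω, (g' (Z ω))⁻¹ * (T ω * Y ω) ∂μ
      = ∫ ω, (g' (Z ω))⁻¹ * (Q 1 (Z ω) * g (Z ω)) ∂μ :=
    my_pull (f := fun ω => T ω * Y ω) (r := fun ω => Q 1 (Z ω) * g (Z ω)) hm smφa hb1 hTY hcTY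
  have e2 : ∫ ω, (g' (Z ω))⁻¹ * (Q' 1 (Z ω) * T ω) ∂μ
      = ∫ ω, (g' (Z ω))⁻¹ * (Q' 1 (Z ω) * g (Z ω)) ∂μ :=
    my_pull (f := fun ω => Q' 1 (Z ω) * T ω) (r := fun ω => Q' 1 (Z ω) * g (Z ω)) hm smφa hb1 iQ1T hcQ1T
  have e3 : ∫ ω, (1 - g' (Z ω))⁻¹ * ((1 - T ω) * Y ω) ∂μ
      = ∫ ω, (1 - g' (Z ω))⁻¹ * (Q 0 (Z ω) * (1 - g (Z ω))) ∂μ :=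
    my_pull (f := fun ω => (1 - T ω) * Y ω) (r := fun ω => Q 0 (Z ω) * (1 - g (Z ω))) hm smφc hb2 h1TY hc1TY
  have e4 : ∫ ω, (1 - g' (Z ω))⁻¹ * (Q' 0 (Z ω) * (1 - T ω)) ∂μ
      = ∫ ω, (1 - g' (Z ω))⁻¹ * (Q' 0 (Z ω) * (1 - g (Z ω))) ∂μ :=
    my_pull (f := fun ω => Q' 0 (Z ω) * (1 - T ω)) (r := fun ω => Q' 0 (Z ω) * (1 - g (Z ω))) hm smφc hb2 iQ0T hcQ0T
  -- integrability of all pieces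
  have if1 : Integrable (fun ω => (g' (Z ω))⁻¹ * (T ω * Y ω)) μ := hTY.bdd_mul aesφa hb1
  have if2 : Integrable (fun ω => (g' (Z ω))⁻¹ * (Q' 1 (Z ω) * T ω)) μ := iQ1T.bdd_mul aesφa hb1
  have if3 : Integrable (fun ω => (1 - g' (Z ω))⁻¹ * ((1 - T ω) * Y ω)) μ :=
    h1TY.bdd_mul aesφc hb2
  have if4 : Integrable (fun ω => (1 - g' (Z ω))⁻¹ * (Q' 0 (Z ω) * (1 - T ω))) μ :=
    iQ0T.bdd_mul aesφc hb2
  have if5 : Integrable (fun ω => Q' 1 (Z ω) - Q' 0 (Z ω)) μ := hQ'1int.sub hQ'0int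
  have ig1 : Integrable (fun ω => (g' (Z ω))⁻¹ * (Q 1 (Z ω) * g (Z ω))) μ :=
    (my_mul_bdd hQ1int (hg.comp hZ).aestronglyMeasurable hgbd).bdd_mul aesφa hb1
  have ig2 : Integrable (fun ω => (g' (Z ω))⁻¹ * (Q' 1 (Z ω) * g (Z ω))) μ :=
    (my_mul_bdd hQ'1int (hg.comp hZ).aestronglyMeasurable hgbd).bdd_mul aesφa hb1
  have ig3 : Integrable (fun ω => (1 - g' (Z ω))⁻¹ * (Q 0 (Z ω) * (1 - g (Z ω)))) μ :=
    (my_mul_bdd hQ0int (measurable_const.sub (hg.comp hZ)).aestronglyMeasurable h1gbd).bdd_mul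
      aesφc hb2
  have ig4 : Integrable (fun ω => (1 - g' (Z ω))⁻¹ * (Q' 0 (Z ω) * (1 - g (Z ω)))) μ :=
    (my_mul_bdd hQ'0int (measurable_const.sub (hg.comp hZ)).aestronglyMeasurable h1gbd).bdd_mul
      aesφc hb2
  -- splitting lemmas
  have s1 : ∫ ω, ((g' (Z ω))⁻¹ * (T ω * Y ω) - (g' (Z ω))⁻¹ * (Q' 1 (Z ω) * T ω)) ∂μ
      = (∫ ω, (g' (Z ω))⁻¹ * (T ω * Y ω) ∂μ)
        - ∫ ω, (g' (Z ω))⁻¹ * (Q' 1 (Z ω) * T ω) ∂μ := integral_sub if1 if2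
  have s2 : ∫ ω, ((g' (Z ω))⁻¹ * (T ω * Y ω) - (g' (Z ω))⁻¹ * (Q' 1 (Z ω) * T ω)
        - (1 - g' (Z ω))⁻¹ * ((1 - T ω) * Y ω)) ∂μ
      = (∫ ω, ((g' (Z ω))⁻¹ * (T ω * Y ω) - (g' (Z ω))⁻¹ * (Q' 1 (Z ω) * T ω)) ∂μ)
        - ∫ ω, (1 - g' (Z ω))⁻¹ * ((1 - T ω) * Y ω) ∂μ := integral_sub (if1.sub if2) if3
  have s3 : ∫ ω, ((g' (Z ω))⁻¹ * (T ω * Y ω) - (g' (Z ω))⁻¹ * (Q' 1 (Z ω) * T ω)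
        - (1 - g' (Z ω))⁻¹ * ((1 - T ω) * Y ω)
        + (1 - g' (Z ω))⁻¹ * (Q' 0 (Z ω) * (1 - T ω))) ∂μ
      = (∫ ω, ((g' (Z ω))⁻¹ * (T ω * Y ω) - (g' (Z ω))⁻¹ * (Q' 1 (Z ω) * T ω)
          - (1 - g' (Z ω))⁻¹ * ((1 - T ω) * Y ω)) ∂μ)
        + ∫ ω, (1 - g' (Z ω))⁻¹ * (Q' 0 (Z ω) * (1 - T ω)) ∂μ :=
    integral_add ((if1.sub if2).sub if3) if4
  have s4 : ∫ ω, ((g' (Z ω))⁻¹ * (T ω * Y ω) - (g' (Z ω))⁻¹ * (Q' 1 (Z ω) * T ω)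
        - (1 - g' (Z ω))⁻¹ * ((1 - T ω) * Y ω)
        + (1 - g' (Z ω))⁻¹ * (Q' 0 (Z ω) * (1 - T ω))
        + (Q' 1 (Z ω) - Q' 0 (Z ω))) ∂μ
      = (∫ ω, ((g' (Z ω))⁻¹ * (T ω * Y ω) - (g' (Z ω))⁻¹ * (Q' 1 (Z ω) * T ω)
          - (1 - g' (Z ω))⁻¹ * ((1 - T ω) * Y ω)
          + (1 - g' (Z ω))⁻¹ * (Q' 0 (Z ω) * (1 - T ω))) ∂μ)
        + ∫ ω, (Q' 1 (Z ω) - Q' 0 (Z ω)) ∂μ :=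
    integral_add (((if1.sub if2).sub if3).add if4) if5
  -- combining lemmas for the g-side
  have t1 : ∫ ω, ((g' (Z ω))⁻¹ * (Q 1 (Z ω) * g (Z ω))
        - (g' (Z ω))⁻¹ * (Q' 1 (Z ω) * g (Z ω))) ∂μ
      = (∫ ω, (g' (Z ω))⁻¹ * (Q 1 (Z ω) * g (Z ω)) ∂μ)
        - ∫ ω, (g' (Z ω))⁻¹ * (Q' 1 (Z ω) * g (Z ω)) ∂μ := integral_sub ig1 ig2
  have t2 : ∫ ω, ((g' (Z ω))⁻¹ * (Q 1 (Z ω) * g (Z ω))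
        - (g' (Z ω))⁻¹ * (Q' 1 (Z ω) * g (Z ω))
        - (1 - g' (Z ω))⁻¹ * (Q 0 (Z ω) * (1 - g (Z ω)))) ∂μ
      = (∫ ω, ((g' (Z ω))⁻¹ * (Q 1 (Z ω) * g (Z ω))
          - (g' (Z ω))⁻¹ * (Q' 1 (Z ω) * g (Z ω))) ∂μ)
        - ∫ ω, (1 - g' (Z ω))⁻¹ * (Q 0 (Z ω) * (1 - g (Z ω))) ∂μ :=
    integral_sub (ig1.sub ig2) ig3
  have t3 : ∫ ω, ((g' (Z ω))⁻¹ * (Q 1 (Z ω) * g (Z ω))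
        - (g' (Z ω))⁻¹ * (Q' 1 (Z ω) * g (Z ω))
        - (1 - g' (Z ω))⁻¹ * (Q 0 (Z ω) * (1 - g (Z ω)))
        + (1 - g' (Z ω))⁻¹ * (Q' 0 (Z ω) * (1 - g (Z ω)))) ∂μ
      = (∫ ω, ((g' (Z ω))⁻¹ * (Q 1 (Z ω) * g (Z ω))
          - (g' (Z ω))⁻¹ * (Q' 1 (Z ω) * g (Z ω))
          - (1 - g' (Z ω))⁻¹ * (Q 0 (Z ω) * (1 - g (Z ω)))) ∂μ)
        + ∫ ω, (1 - g' (Z ω))⁻¹ * (Q' 0 (Z ω) * (1 - g (Z ω))) ∂μ :=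
    integral_add ((ig1.sub ig2).sub ig3) ig4
  have t4 : ∫ ω, ((g' (Z ω))⁻¹ * (Q 1 (Z ω) * g (Z ω))
        - (g' (Z ω))⁻¹ * (Q' 1 (Z ω) * g (Z ω))
        - (1 - g' (Z ω))⁻¹ * (Q 0 (Z ω) * (1 - g (Z ω)))
        + (1 - g' (Z ω))⁻¹ * (Q' 0 (Z ω) * (1 - g (Z ω)))
        + (Q' 1 (Z ω) - Q' 0 (Z ω))) ∂μ
      = (∫ ω, ((g' (Z ω))⁻¹ * (Q 1 (Z ω) * g (Z ω))
          - (g' (Z ω))⁻¹ * (Q' 1 (Z ω) * g (Z ω))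
          - (1 - g' (Z ω))⁻¹ * (Q 0 (Z ω) * (1 - g (Z ω)))
          + (1 - g' (Z ω))⁻¹ * (Q' 0 (Z ω) * (1 - g (Z ω)))) ∂μ)
        + ∫ ω, (Q' 1 (Z ω) - Q' 0 (Z ω)) ∂μ :=
    integral_add (((ig1.sub ig2).sub ig3).add ig4) if5
  -- the a.e. pointwise identity under the double-robustness hypothesis
  have key : ∀ᵐ ω ∂μ, (g' (Z ω))⁻¹ * (Q 1 (Z ω) * g (Z ω))
        - (g' (Z ω))⁻¹ * (Q' 1 (Z ω) * g (Z ω))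
        - (1 - g' (Z ω))⁻¹ * (Q 0 (Z ω) * (1 - g (Z ω)))
        + (1 - g' (Z ω))⁻¹ * (Q' 0 (Z ω) * (1 - g (Z ω)))
        + (Q' 1 (Z ω) - Q' 0 (Z ω)) = Q 1 (Z ω) - Q 0 (Z ω) := by
    rcases hdr with h | h
    · filter_upwards [hpos] with ω _
      simp only [h]; ring
    · filter_upwards [hpos] with ω hp
      have hg0 : g (Z ω) ≠ 0 := ne_of_gt (lt_of_lt_of_le hε hp.1)
      have hg1 : 1 - g (Z ω) ≠ 0 := by
        have : ε ≤ 1 - g (Z ω) := by linarith [hp.2]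
        exact ne_of_gt (lt_of_lt_of_le hε this)
      simp only [h]
      field_simp
      ring
  -- put everything together
  calc ∫ ω, (T ω / g' (Z ω) * (Y ω - Q' 1 (Z ω))
        - (1 - T ω) / (1 - g' (Z ω)) * (Y ω - Q' 0 (Z ω))
        + (Q' 1 (Z ω) - Q' 0 (Z ω))) ∂μ
      = ∫ ω, ((g' (Z ω))⁻¹ * (T ω * Y ω) - (g' (Z ω))⁻¹ * (Q' 1 (Z ω) * T ω)
          - (1 - g' (Z ω))⁻¹ * ((1 - T ω) * Y ω)
          + (1 - g' (Z ω))⁻¹ * (Q' 0 (Z ω) * (1 - T ω))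
          + (Q' 1 (Z ω) - Q' 0 (Z ω))) ∂μ := by
        refine integral_congr_ae (Filter.Eventually.of_forall fun ω => ?_)
        ring
    _ = (∫ ω, (g' (Z ω))⁻¹ * (T ω * Y ω) ∂μ)
        - (∫ ω, (g' (Z ω))⁻¹ * (Q' 1 (Z ω) * T ω) ∂μ)
        - (∫ ω, (1 - g' (Z ω))⁻¹ * ((1 - T ω) * Y ω) ∂μ)
        + (∫ ω, (1 - g' (Z ω))⁻¹ * (Q' 0 (Z ω) * (1 - T ω)) ∂μ)
        + ∫ ω, (Q' 1 (Z ω) - Q' 0 (Z ω)) ∂μ := by rw [s4, s3, s2, s1]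
    _ = (∫ ω, (g' (Z ω))⁻¹ * (Q 1 (Z ω) * g (Z ω)) ∂μ)
        - (∫ ω, (g' (Z ω))⁻¹ * (Q' 1 (Z ω) * g (Z ω)) ∂μ)
        - (∫ ω, (1 - g' (Z ω))⁻¹ * (Q 0 (Z ω) * (1 - g (Z ω))) ∂μ)
        + (∫ ω, (1 - g' (Z ω))⁻¹ * (Q' 0 (Z ω) * (1 - g (Z ω))) ∂μ)
        + ∫ ω, (Q' 1 (Z ω) - Q' 0 (Z ω)) ∂μ := by rw [e1, e2, e3, e4]
    _ = ∫ ω, ((g' (Z ω))⁻¹ * (Q 1 (Z ω) * g (Z ω))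
          - (g' (Z ω))⁻¹ * (Q' 1 (Z ω) * g (Z ω))
          - (1 - g' (Z ω))⁻¹ * (Q 0 (Z ω) * (1 - g (Z ω)))
          + (1 - g' (Z ω))⁻¹ * (Q' 0 (Z ω) * (1 - g (Z ω)))
          + (Q' 1 (Z ω) - Q' 0 (Z ω))) ∂μ := by rw [t4, t3, t2, t1]
    _ = ∫ ω, (Q 1 (Z ω) - Q 0 (Z ω)) ∂μ := integral_congr_ae key
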